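/- Let H be a complex Hilbert space, n ≥ 1, and H₁, …, H_n closed subspaces of H. Assume there exists c > 0 such that ‖x₁ + ⋯ + x_n‖ ≥ c·(‖x₁‖² + ⋯ + ‖x_n‖²)^{1/2} for all x_j ∈ H_j. For each j ∈ {1,…,n} let I_j be an index set, (φ_i^j)_{i∈I_j} a family in H_j, and (f_i^j)_{i∈I_j} a family in H such that ⟨φ_i^j, f_{i'}^j⟩ = δ_{i,i'} for all i, i' ∈ I_j. Then there exists a family (g_i^j) in H such that ⟨φ_{i'}^{j'}, g_i^j⟩ = 1 if (i,j) = (i',j') and 0 otherwise, and ‖g_i^j‖ ≤ (1/c)·‖f_i^j‖ for all i, j. -/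

import Mathlib

set_option maxHeartbeats 1000000
set_option synthInstance.maxHeartbeats 400000


open scoped InnerProductSpace

noncomputable section

theorem stmt10 (H : Type*) [NormedAddCommGroup H] [InnerProductSpace ℂ H] [CompleteSpace H]
    (n : ℕ) (hn : 1 ≤ n)
    (S : Fin n → Submodule ℂ H) (hS : ∀ j, IsClosed (S j : Set H))
    (c : ℝ) (hc : 0 < c)
    -- the summation operator `H₁ ⊕ ⋯ ⊕ Hₙ → H` is bounded below:
    (hlow : ∀ x : Fin n → H, (∀ j, x j ∈ S j) →
      c * Real.sqrt (∑ j, ‖x j‖ ^ 2) ≤ ‖∑ j, x j‖)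
    (I : Fin n → Type*)
    (φ : (j : Fin n) → I j → H) (hφ : ∀ j i, φ j i ∈ S j)
    (f : (j : Fin n) → I j → H)
    -- for each `j`, `(f i^j)` is biorthogonal to `(φ i^j)`:
    (hbio : ∀ (j : Fin n) (i i' : I j),
      (i = i' → ⟪φ j i, f j i'⟫_ℂ = 1) ∧ (i ≠ i' → ⟪φ j i, f j i'⟫_ℂ = 0)) :
    ∃ g : (j : Fin n) → I j → H,
      -- `(g i^j)` is biorthogonal to the whole family `(φ i^j)`:
      (∀ p q : (j : Fin n) × I j,
        (p = q → ⟪φ q.1 q.2, g p.1 p.2⟫_ℂ = 1) ∧ (p ≠ q → ⟪φ q.1 q.2, g p.1 p.2⟫_ℂ = 0)) ∧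
      -- with the norm bound `‖g_i^j‖ ≤ (1/c) ‖f_i^j‖`:
      (∀ (j : Fin n) (i : I j), ‖g j i‖ ≤ (1 / c) * ‖f j i‖) := by
  classical
  haveI : ∀ j, CompleteSpace (S j) := fun j => (hS j).completeSpace_coe
  -- the Hilbertian direct sum
  set E : Type _ := PiLp 2 (fun j : Fin n => S j) with hEdef
  -- the summation linear map
  let Tlin : E →ₗ[ℂ] H :=
    { toFun := fun x => ∑ j, (x j : H)
      map_add' := by
        intro x y
        show ∑ k, ((x k : H) + (y k : H)) = ∑ k, (x k : H) + ∑ k, (y k : H)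
        rw [Finset.sum_add_distrib]
      map_smul' := by
        intro a x
        show ∑ k, a • (x k : H) = a • ∑ k, (x k : H)
        rw [Finset.smul_sum] }
  have hTapp : ∀ x : E, Tlin x = ∑ j, (x j : H) := fun x => rfl
  -- coordinate norm bound
  have hcoord : ∀ (x : E) (j : Fin n), ‖x j‖ ≤ ‖x‖ := by
    intro x j
    rw [PiLp.norm_eq_of_L2]
    have h1 : ‖x j‖ ^ 2 ≤ ∑ k, ‖x k‖ ^ 2 :=
      Finset.single_le_sum (f := fun k => ‖x k‖ ^ 2)
        (fun k _ => sq_nonneg _) (Finset.mem_univ j)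
    calc ‖x j‖ = Real.sqrt (‖x j‖ ^ 2) := by
          rw [Real.sqrt_sq (norm_nonneg _)]
      _ ≤ Real.sqrt (∑ k, ‖x k‖ ^ 2) := Real.sqrt_le_sqrt h1
  -- the lower bound in terms of the `PiLp` norm
  have hlow' : ∀ x : E, c * ‖x‖ ≤ ‖Tlin x‖ := by
    intro x
    rw [PiLp.norm_eq_of_L2, hTapp]
    have := hlow (fun j => (x j : H)) (fun j => (x j).2)
    simpa using this
  have hinvb : ∀ x : E, ‖x‖ ≤ (1 / c) * ‖Tlin x‖ := by
    intro x
    rw [div_mul_eq_mul_div, le_div_iff₀ hc, one_mul, mul_comm]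
    exact hlow' x
  -- `Tlin` is injective
  have hTinj : Function.Injective Tlin := by
    intro x y hxy
    have : ‖x - y‖ ≤ (1 / c) * ‖Tlin (x - y)‖ := hinvb _
    rw [map_sub, hxy, sub_self, norm_zero, mul_zero] at this
    have : x - y = 0 := norm_le_zero_iff.mp this
    exact sub_eq_zero.mp this
  -- continuity of `Tlin`
  let T : E →L[ℂ] H := LinearMap.mkContinuous Tlin n (by
    intro x
    rw [hTapp]
    calc ‖∑ j, (x j : H)‖ ≤ ∑ j, ‖(x j : H)‖ := norm_sum_le _ _
      _ ≤ ∑ _j : Fin n, ‖x‖ := Finset.sum_le_sum (fun j _ => hcoord x j)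
      _ = n * ‖x‖ := by simp [Finset.sum_const, nsmul_eq_mul])
  have hTc : ∀ x : E, T x = Tlin x := fun x => rfl
  -- the range of `Tlin` is complete
  haveI hEc : CompleteSpace E := by
    let u : E ≃ᵤ (∀ j, S j) :=
      { toEquiv := WithLp.equiv 2 _
        uniformContinuous_toFun := PiLp.uniformContinuous_ofLp 2 _
        uniformContinuous_invFun := PiLp.uniformContinuous_toLp 2 _ }
    exact u.completeSpace_iff.mpr inferInstance
  have hanti : AntilipschitzWith (⟨1 / c, by positivity⟩ : NNReal) T :=
    T.antilipschitz_of_bound (fun x => hinvb x)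
  have hclosed : IsClosed (Set.range (⇑T)) :=
    hanti.isClosed_range T.uniformContinuous
  have hrange : (LinearMap.range Tlin : Set H) = Set.range (⇑T) := by
    ext v; simp [LinearMap.mem_range, hTc, Set.mem_range]
  haveI : CompleteSpace (LinearMap.range Tlin) := by
    rw [← hrange] at hclosed
    exact hclosed.completeSpace_coe
  -- the inverse equivalence
  let e : E ≃ₗ[ℂ] LinearMap.range Tlin := LinearEquiv.ofInjective Tlin hTinj
  have he : ∀ x : E, ((e x : H)) = Tlin x := fun x => rfl
  -- key construction: for each (j,i) produce the dual element
  have key : ∀ (j : Fin n) (i : I j), ∃ g0 : H,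
      (∀ i' : I j, ⟪φ j i', g0⟫_ℂ = ⟪φ j i', f j i⟫_ℂ) ∧
      (∀ j' : Fin n, j' ≠ j → ∀ i' : I j', ⟪φ j' i', g0⟫_ℂ = 0) ∧
      ‖g0‖ ≤ (1 / c) * ‖f j i‖ := by
    intro j i
    -- the functional
    let ℓlin : (LinearMap.range Tlin) →ₗ[ℂ] ℂ :=
      { toFun := fun v => ⟪f j i, ((e.symm v : E) j : H)⟫_ℂ
        map_add' := by
          intro v w
          show ⟪f j i, ((e.symm (v + w) : E) j : H)⟫_ℂ = _
          rw [map_add]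
          show ⟪f j i, ((e.symm v : E) j : H) + ((e.symm w : E) j : H)⟫_ℂ = _
          rw [inner_add_right]
        map_smul' := by
          intro a v
          show ⟪f j i, ((e.symm (a • v) : E) j : H)⟫_ℂ = _
          rw [map_smul]
          show ⟪f j i, a • ((e.symm v : E) j : H)⟫_ℂ = _
          rw [inner_smul_right]
          rfl }
    have hbound : ∀ v, ‖ℓlin v‖ ≤ ((1 / c) * ‖f j i‖) * ‖v‖ := by
      intro v
      have h1 : ‖ℓlin v‖ ≤ ‖f j i‖ * ‖((e.symm v : E) j : H)‖ :=
        norm_inner_le_norm _ _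
      have h2 : ‖((e.symm v : E) j : H)‖ ≤ ‖(e.symm v : E)‖ := hcoord _ j
      have h3 : ‖(e.symm v : E)‖ ≤ (1 / c) * ‖v‖ := by
        have h4 := hinvb (e.symm v)
        rwa [show Tlin (e.symm v) = (v : H) by
          rw [← he]; simp, show ‖(v : H)‖ = ‖v‖ from rfl] at h4
      calc ‖ℓlin v‖ ≤ ‖f j i‖ * ‖((e.symm v : E) j : H)‖ := h1
        _ ≤ ‖f j i‖ * ((1 / c) * ‖v‖) := by
            refine mul_le_mul_of_nonneg_left (le_trans h2 h3) (norm_nonneg _)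
        _ = ((1 / c) * ‖f j i‖) * ‖v‖ := by ring
    let ℓ : (LinearMap.range Tlin) →L[ℂ] ℂ :=
      LinearMap.mkContinuous ℓlin ((1 / c) * ‖f j i‖) hbound
    let g' : LinearMap.range Tlin :=
      (InnerProductSpace.toDual ℂ (LinearMap.range Tlin)).symm ℓ
    -- main computation of inner products with the φ's
    have main : ∀ (j' : Fin n) (i' : I j'),
        ⟪φ j' i', (g' : H)⟫_ℂ =
          ⟪((((WithLp.equiv 2 ((k : Fin n) → S k)).symm
              (Pi.single j' (⟨φ j' i', hφ j' i'⟩ : S j')) : E) j : H)), f j i⟫_ℂ := by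
      intro j' i'
      set vS : S j' := (⟨φ j' i', hφ j' i'⟩ : S j') with hvS
      set x : E := (WithLp.equiv 2 ((k : Fin n) → S k)).symm (Pi.single j' vS) with hx
      have hxk : ∀ k, x k = (Pi.single j' vS : (k : Fin n) → S k) k := fun k => rfl
      have hTx : Tlin x = φ j' i' := by
        rw [hTapp]
        rw [Finset.sum_eq_single j']
        · rw [hxk]; simp [hvS]
        · intro k _ hk
          rw [hxk, Pi.single_eq_of_ne hk]
          simp
        · intro h; exact absurd (Finset.mem_univ j') h
      have hwmem : φ j' i' ∈ LinearMap.range Tlin := ⟨x, hTx⟩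
      set w : LinearMap.range Tlin := ⟨φ j' i', hwmem⟩ with hw
      have hew : e x = w := by
        apply Subtype.ext
        rw [he, hTx, hw]
      have hesw : e.symm w = x := by rw [← hew, LinearEquiv.symm_apply_apply]
      have h5 : ⟪φ j' i', (g' : H)⟫_ℂ = ⟪w, g'⟫_ℂ := by
        rw [Submodule.coe_inner]
      rw [h5, ← inner_conj_symm, InnerProductSpace.toDual_symm_apply]
      have h6 : ℓ w = ⟪f j i, ((e.symm w : E) j : H)⟫_ℂ := rfl
      rw [h6, hesw, inner_conj_symm]
    refine ⟨(g' : H), ?_, ?_, ?_⟩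
    · intro i'
      rw [main j i']
      have hxj : (((WithLp.equiv 2 ((k : Fin n) → S k)).symm
          (Pi.single j (⟨φ j i', hφ j i'⟩ : S j)) : E) j : H) = φ j i' := by
        rw [WithLp.equiv_symm_apply, PiLp.toLp_apply, Pi.single_eq_same]
      rw [hxj]
    · intro j' hj' i'
      rw [main j' i']
      have hxj : (((WithLp.equiv 2 ((k : Fin n) → S k)).symm
          (Pi.single j' (⟨φ j' i', hφ j' i'⟩ : S j')) : E) j : H) = 0 := by
        rw [WithLp.equiv_symm_apply, PiLp.toLp_apply, Pi.single_eq_of_ne (Ne.symm hj')]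
        rfl
      rw [hxj, inner_zero_left]
    · have hnorm : ‖(g' : H)‖ = ‖ℓ‖ := by
        show ‖g'‖ = ‖ℓ‖
        exact (InnerProductSpace.toDual ℂ (LinearMap.range Tlin)).symm.norm_map ℓ
      rw [hnorm]
      exact LinearMap.mkContinuous_norm_le ℓlin (by positivity) hbound
  -- choose `g`
  choose g hg1 hg2 hg3 using key
  refine ⟨g, ?_, hg3⟩
  rintro ⟨j, i⟩ q
  constructor
  · rintro rfl
    rw [hg1 j i i]
    exact (hbio j i i).1 rfl
  · intro h
    obtain ⟨j', i'⟩ := q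
    by_cases hj : j' = j
    · rcases hj with rfl
      have hi : i' ≠ i := by
        intro hii
        exact h (by rw [hii])
      rw [hg1 _ i i']
      exact (hbio _ i' i).2 hi
    · exact hg2 j i j' hj i'
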